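/- Let p ∈ (0,1]^n with p_s = p for s < n and p_n = 1, where p ∈ (0,1]. The probability that the permute-and-flip process (iterate through a uniformly random permutation of the n items and return the first item whose Bernoulli(p_r) coin is heads) returns item n equals (1 - (1-p)^n)/(np). -/

import Mathlib

/-- The probability that permute-and-flip returns item `n` (the item with coin
probability 1), expressed via its probability mass function
`Pr[PF = r] = p_r · (1/n!) · ∑_π ∏_{s : π(s) < π(r)} (1 - p_s)`. -/
theorem stmt_7 (n : ℕ) (hn : 0 < n) (p : ℝ) (hp : p ∈ Set.Ioc (0 : ℝ) 1)
    (q : Fin n → ℝ) (lastIdx : Fin n) (hlast : lastIdx = ⟨n - 1, by omega⟩)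
    (hq : ∀ s, q s = if s = lastIdx then 1 else p) :
    q lastIdx * ((1 : ℝ) / (Nat.factorial n) *
      ∑ π : Equiv.Perm (Fin n),
        ∏ s ∈ Finset.univ.filter (fun s => π s < π lastIdx), (1 - q s))
    = (1 - (1 - p) ^ n) / (n * p) := by
  obtain ⟨m, rfl⟩ : ∃ m, n = m + 1 := ⟨n - 1, by omega⟩
  obtain ⟨hp0, hp1⟩ := hp
  have hql : q lastIdx = 1 := by rw [hq]; simp
  have hprod : ∀ π : Equiv.Perm (Fin (m+1)),
      ∏ s ∈ Finset.univ.filter (fun s => π s < π lastIdx), (1 - q s)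
        = (1 - p) ^ ((π lastIdx : ℕ)) := by
    intro π
    have h1 : ∀ s ∈ Finset.univ.filter (fun s => π s < π lastIdx), (1 - q s) = 1 - p := by
      intro s hs
      simp only [Finset.mem_filter] at hs
      have hne : s ≠ lastIdx := by
        intro h; rw [h] at hs; exact absurd hs.2 (lt_irrefl _)
      rw [hq]; simp [hne]
    rw [Finset.prod_congr rfl h1, Finset.prod_const]
    congr 1
    have : (Finset.univ.filter (fun s => π s < π lastIdx)).card
        = (Finset.Iio (π lastIdx)).card := by
      apply Finset.card_bij (fun s _ => π s)
      · intro s hs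
        simp only [Finset.mem_filter] at hs
        simpa using hs.2
      · intro a _ b _ h; exact π.injective h
      · intro t ht
        refine ⟨π.symm t, ?_, by simp⟩
        simp only [Finset.mem_filter, Finset.mem_univ, true_and, Equiv.apply_symm_apply]
        simpa using ht
    rw [this, Fin.card_Iio]
  rw [Finset.sum_congr rfl (fun π _ => hprod π)]
  have hswap : ∑ π : Equiv.Perm (Fin (m+1)), (1 - p) ^ ((π lastIdx : ℕ))
      = ∑ π : Equiv.Perm (Fin (m+1)), (1 - p) ^ ((π 0 : ℕ)) := by
    rw [← Equiv.sum_comp (Equiv.mulRight (Equiv.swap lastIdx 0))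
      (fun π => (1 - p) ^ ((π lastIdx : ℕ)))]
    apply Finset.sum_congr rfl
    intro π _
    simp [Equiv.Perm.mul_apply, Equiv.swap_apply_left]
  rw [hswap]
  have hdec : ∑ π : Equiv.Perm (Fin (m+1)), (1 - p) ^ ((π 0 : ℕ))
      = (m.factorial : ℝ) * ∑ k : Fin (m+1), (1 - p) ^ (k : ℕ) := by
    rw [← Equiv.sum_comp (Equiv.Perm.decomposeFin (n := m)).symm
      (fun π => (1 - p) ^ ((π 0 : ℕ)))]
    rw [Fintype.sum_prod_type]
    simp only [Equiv.Perm.decomposeFin_symm_apply_zero]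
    rw [Finset.sum_comm]
    simp [Finset.sum_const, Fintype.card_perm, mul_comm]
  rw [hdec]
  have hgeom : ∑ k : Fin (m+1), (1 - p) ^ (k : ℕ) = (1 - (1 - p) ^ (m+1)) / p := by
    rw [Fin.sum_univ_eq_sum_range (fun k => (1 - p) ^ k)]
    rw [geom_sum_eq (by intro h; nlinarith [h] : (1 : ℝ) - p ≠ 1)]
    have h2 : (1:ℝ) - p - 1 = -p := by ring
    rw [h2, div_neg, ← neg_div]
    congr 1
    ring
  rw [hgeom, hql]
  have hfac : (((m+1).factorial : ℝ)) = (m+1) * m.factorial := by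
    rw [Nat.factorial_succ]; push_cast; ring
  have hm : (m.factorial : ℝ) ≠ 0 := Nat.cast_ne_zero.mpr (Nat.factorial_ne_zero m)
  have hn1 : ((m:ℝ)+1) ≠ 0 := by positivity
  rw [hfac]
  field_simp
  push_cast
  ring
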